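/- If every positive cone of a finitely generated group G fails to be coarsely connected in the Cayley graph (for instance if G has the Hucha property), then no positive cone of G is finitely generated as a sub-semigroup, and no positive cone of G is the evaluation of a regular language over a finite generating set. -/

import Mathlib

open scoped Pointwise

/-- A positive cone of a group `G`: a subsemigroup `P` such that
`G = P ⊔ P⁻¹ ⊔ {1}` (disjoint union). -/
def IsPositiveCone {G : Type*} [Group G] (P : Set G) : Prop :=
  (∀ a ∈ P, ∀ b ∈ P, a * b ∈ P) ∧
  (∀ g : G, g ∈ P ∨ g⁻¹ ∈ P ∨ g = 1) ∧
  (∀ g ∈ P, g⁻¹ ∉ P) ∧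
  (1 : G) ∉ P

/-- Word length of `g` with respect to the generating set `X`. -/
noncomputable def wordLength {G : Type*} [Group G] (X : Set G) (g : G) : ℕ :=
  sInf {n | ∃ l : List G, (∀ x ∈ l, x ∈ X) ∧ l.length = n ∧ l.prod = g}

/-- Word metric on `G` with respect to `X`. -/
noncomputable def wordDist {G : Type*} [Group G] (X : Set G) (g h : G) : ℕ :=
  wordLength X (g⁻¹ * h)

/-- An `r`-path from `a` to `b` supported in `S` (consecutive word-metric
distances at most `r`). -/
def IsRPath {G : Type*} [Group G] (X : Set G) (r : ℕ) (S : Set G) (a b : G) : Prop :=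
  ∃ l : List G, l ≠ [] ∧ l.head? = some a ∧ l.getLast? = some b ∧
    (∀ x ∈ l, x ∈ S) ∧ l.Chain' (fun u v => wordDist X u v ≤ r)

/-- `S` is `r`-coarsely connected in the Cayley graph `Γ(G,X)`. -/
def CoarselyConnectedWith {G : Type*} [Group G] (X : Set G) (r : ℕ) (S : Set G) : Prop :=
  ∀ a ∈ S, ∀ b ∈ S, IsRPath X r S a b

/-- `X` is a finite symmetric generating set of `G`. -/
def IsGenSet {G : Type*} [Group G] (X : Set G) : Prop :=
  X.Finite ∧ (∀ x ∈ X, x⁻¹ ∈ X) ∧ Subgroup.closure X = ⊤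

/-- A positive cone on a subset `K` of `G` (used for subgroups such as kernels). -/
def IsPositiveConeOn {G : Type*} [Group G] (K P : Set G) : Prop :=
  P ⊆ K ∧ (∀ a ∈ P, ∀ b ∈ P, a * b ∈ P) ∧ (∀ g ∈ K, g ∈ P ∨ g⁻¹ ∈ P ∨ g = 1) ∧
  (∀ g ∈ P, g⁻¹ ∉ P) ∧ (1 : G) ∉ P

/-- The sub-semigroup generated by `S`: nonempty products of elements of `S`. -/
def SemigroupClosure {G : Type*} [Group G] (S : Set G) : Set G :=
  {g | ∃ l : List G, l ≠ [] ∧ (∀ x ∈ l, x ∈ S) ∧ l.prod = g}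

section AuxWordLength
variable {G : Type*} [Group G] {X : Set G}

lemma exists_word (hX : IsGenSet X) (g : G) :
    ∃ l : List G, (∀ x ∈ l, x ∈ X) ∧ l.prod = g := by
  have hg : g ∈ (Subgroup.closure X).toSubmonoid := by
    rw [hX.2.2]; trivial
  rw [Subgroup.closure_toSubmonoid] at hg
  obtain ⟨l, hl, hp⟩ := Submonoid.exists_list_of_mem_closure hg
  refine ⟨l, fun x hx => ?_, hp⟩
  rcases hl x hx with h | h
  · exact h
  · simpa using hX.2.1 _ h

lemma wl_le {g : G} {l : List G} (hl : ∀ x ∈ l, x ∈ X) (hp : l.prod = g) :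
    wordLength X g ≤ l.length := Nat.sInf_le ⟨l, hl, rfl, hp⟩

lemma wl_spec (hX : IsGenSet X) (g : G) :
    ∃ l : List G, (∀ x ∈ l, x ∈ X) ∧ l.length = wordLength X g ∧ l.prod = g := by
  have hne : {n | ∃ l : List G, (∀ x ∈ l, x ∈ X) ∧ l.length = n ∧ l.prod = g}.Nonempty := by
    obtain ⟨l, hl, hp⟩ := exists_word hX g
    exact ⟨l.length, l, hl, rfl, hp⟩
  exact Nat.sInf_mem hne

lemma wl_mul (hX : IsGenSet X) (g h : G) :
    wordLength X (g * h) ≤ wordLength X g + wordLength X h := by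
  obtain ⟨l1, h1, hl1, hp1⟩ := wl_spec hX g
  obtain ⟨l2, h2, hl2, hp2⟩ := wl_spec hX h
  have := wl_le (l := l1 ++ l2) (g := g * h)
    (by intro x hx; rcases List.mem_append.mp hx with h | h; exacts [h1 x h, h2 x h])
    (by simp [hp1, hp2])
  simpa [hl1, hl2] using this

lemma wl_inv_le (hX : IsGenSet X) (g : G) : wordLength X g⁻¹ ≤ wordLength X g := by
  obtain ⟨l, hl, hlen, hp⟩ := wl_spec hX g
  have := wl_le (l := (l.map fun x => x⁻¹).reverse) (g := g⁻¹)
    (by intro x hx; simp only [List.mem_reverse, List.mem_map] at hx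
        obtain ⟨y, hy, rfl⟩ := hx; exact hX.2.1 _ (hl y hy))
    (by rw [← List.prod_inv_reverse, hp])
  simpa [hlen] using this

lemma wl_inv (hX : IsGenSet X) (g : G) : wordLength X g⁻¹ = wordLength X g :=
  le_antisymm (wl_inv_le hX g) (by simpa using wl_inv_le hX g⁻¹)

lemma wl_one : wordLength X (1 : G) = 0 :=
  Nat.le_zero.mp (by simpa using wl_le (l := ([] : List G)) (by simp) (by simp))

lemma wd_symm (hX : IsGenSet X) (u v : G) : wordDist X u v = wordDist X v u := by
  unfold wordDist
  rw [← wl_inv hX (u⁻¹ * v)]; simp [mul_comm]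

lemma wd_self (u : G) : wordDist X u u = 0 := by simp [wordDist, wl_one]

lemma wl_prod_le (hX : IsGenSet X) {M : ℕ} {l : List G} (h : ∀ x ∈ l, wordLength X x ≤ M) :
    wordLength X l.prod ≤ l.length * M := by
  induction l with
  | nil => simp [wl_one]
  | cons x t ih =>
    simp only [List.prod_cons, List.length_cons]
    calc wordLength X (x * t.prod) ≤ wordLength X x + wordLength X t.prod := wl_mul hX _ _
      _ ≤ M + t.length * M := add_le_add (h x (by simp)) (ih fun y hy => h y (by simp [hy]))
      _ = (t.length + 1) * M := by ring

end AuxWordLength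

section AuxPath
variable {G : Type*} [Group G] {X : Set G} {r : ℕ} {S : Set G}

lemma isRPath_single {a : G} (ha : a ∈ S) : IsRPath X r S a a :=
  ⟨[a], by simp, by simp, by simp, by simpa, by simp [List.Chain']⟩

lemma IsRPath.symm (hX : IsGenSet X) {a b : G} (h : IsRPath X r S a b) : IsRPath X r S b a := by
  obtain ⟨l, hne, hh, hl, hmem, hch⟩ := h
  refine ⟨l.reverse, by simpa, by simpa [List.head?_reverse], by simpa [List.getLast?_reverse],
    by simpa using hmem, ?_⟩
  simp only [List.Chain'] at hch ⊢
  rw [List.isChain_reverse]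
  refine hch.imp ?_
  intro u v h
  simpa [Function.flip_def, wd_symm hX] using h

lemma IsRPath.trans {a b c : G} (h1 : IsRPath X r S a b) (h2 : IsRPath X r S b c) :
    IsRPath X r S a c := by
  obtain ⟨l1, hne1, hh1, hl1, hmem1, hch1⟩ := h1
  obtain ⟨l2, hne2, hh2, hl2, hmem2, hch2⟩ := h2
  refine ⟨l1 ++ l2, by simp [hne1], ?_, ?_, ?_, ?_⟩
  · rwa [List.head?_append_of_ne_nil _ hne1]
  · rwa [List.getLast?_append_of_ne_nil _ hne2]
  · intro x hx; rcases List.mem_append.mp hx with h | h; exacts [hmem1 x h, hmem2 x h]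
  · simp only [List.Chain'] at hch1 hch2 ⊢
    rw [List.isChain_append]
    refine ⟨hch1, hch2, ?_⟩
    intro x hx y hy
    rw [hl1] at hx; rw [hh2] at hy
    cases hx; cases hy
    simp [wd_self]

lemma IsRPath.extend {a b c : G} (h : IsRPath X r S a b) (hc : c ∈ S)
    (hd : wordDist X b c ≤ r) : IsRPath X r S a c := by
  refine h.trans ⟨[b, c], by simp, by simp, by simp, ?_, ?_⟩
  · intro x hx
    obtain ⟨l, _, _, hl, hmem, _⟩ := h
    rcases List.mem_pair.mp hx with rfl | rfl
    · exact hmem x (List.mem_of_mem_getLast? (by simp [hl]))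
    · exact hc
  · simpa [List.Chain'] using hd

end AuxPath

/-- if no positive cone of `G` is coarsely connected, then no
positive cone is finitely generated as a sub-semigroup, and no positive cone
is the evaluation of a regular language over a finite symmetric generating
set. -/
theorem stmt_19 {G : Type*} [Group G] (X : Set G) (hX : IsGenSet X)
    (hncc : ∀ P : Set G, IsPositiveCone P →
      ∀ r : ℕ, 1 ≤ r → ¬ CoarselyConnectedWith X r P) :
    ∀ P : Set G, IsPositiveCone P →
      (¬ ∃ S : Finset G, P = SemigroupClosure (S : Set G)) ∧
      (¬ ∃ (Y : Set G) (_ : IsGenSet Y) (σ : Type) (_ : Fintype σ)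
          (τ : σ → G → σ) (s0 : σ) (acc : Set σ),
          P = {g : G | ∃ l : List G, (∀ x ∈ l, x ∈ Y) ∧
            List.foldl τ s0 l ∈ acc ∧ l.prod = g}) := by
  intro P hP
  constructor
  · rintro ⟨S, rfl⟩
    classical
    set r : ℕ := S.sup (fun s => wordLength X s)
      + (S ×ˢ S).sup (fun p => wordDist X p.1 p.2) + 1 with hrdef
    have hS_mem : ∀ s ∈ S, s ∈ SemigroupClosure (S : Set G) := fun s hs =>
      ⟨[s], by simp, by simpa, by simp⟩
    have key : ∀ l : List G, l ≠ [] → (∀ x ∈ l, x ∈ S) →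
        ∃ s, s ∈ S ∧ IsRPath X r (SemigroupClosure (S : Set G)) s l.prod := by
      intro l
      induction l using List.reverseRecOn with
      | nil => intro h; exact absurd rfl h
      | append_singleton l t ih =>
        intro _ hmem
        have ht : t ∈ S := hmem t (by simp)
        rcases eq_or_ne l [] with rfl | hl
        · refine ⟨t, ht, ?_⟩
          simpa using isRPath_single (hS_mem t ht)
        · obtain ⟨s, hs, hp⟩ := ih hl (fun x hx => hmem x (by simp [hx]))
          refine ⟨s, hs, ?_⟩
          have hmemP : l.prod * t ∈ SemigroupClosure (S : Set G) :=
            ⟨l ++ [t], by simp, by intro x hx; exact hmem x hx, by simp⟩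
          have hd : wordDist X l.prod (l.prod * t) ≤ r := by
            have heq : wordDist X l.prod (l.prod * t) = wordLength X t := by
              simp [wordDist]
            rw [heq, hrdef]
            have h2 : wordLength X t ≤ S.sup (fun s => wordLength X s) :=
              Finset.le_sup ht
            omega
          have := hp.extend hmemP hd
          simpa using this
    have hcc : CoarselyConnectedWith X r (SemigroupClosure (S : Set G)) := by
      intro a ha b hb
      obtain ⟨la, hlane, hlamem, rfl⟩ := ha
      obtain ⟨lb, hlbne, hlbmem, rfl⟩ := hb
      obtain ⟨s, hs, pa⟩ := key la hlane hlamem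
      obtain ⟨t, ht, pb⟩ := key lb hlbne hlbmem
      have hst : wordDist X s t ≤ r := by
        have h2 : wordDist X s t ≤ (S ×ˢ S).sup (fun p => wordDist X p.1 p.2) :=
          Finset.le_sup (f := fun p : G × G => wordDist X p.1 p.2)
            (Finset.mem_product.mpr (⟨hs, ht⟩ : (s, t).1 ∈ S ∧ (s, t).2 ∈ S))
        rw [hrdef]; omega
      exact (((pa.symm hX).extend (hS_mem t ht) hst).trans pb)
    exact hncc _ hP r (by omega) hcc
  · rintro ⟨Y, hY, σ, _inst, τ, s0, acc, rfl⟩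
    classical
    set Q : Set G := {g : G | ∃ l : List G, (∀ x ∈ l, x ∈ Y) ∧
      List.foldl τ s0 l ∈ acc ∧ l.prod = g} with hQdef
    have memQ : ∀ l : List G, (∀ x ∈ l, x ∈ Y) → List.foldl τ s0 l ∈ acc → l.prod ∈ Q :=
      fun l h1 h2 => ⟨l, h1, h2, rfl⟩
    set MY : ℕ := hY.1.toFinset.sup (fun y => wordLength X y) with hMYdef
    have hMY : ∀ y ∈ Y, wordLength X y ≤ MY := fun y hy =>
      Finset.le_sup (hY.1.mem_toFinset.mpr hy)
    set C : σ → Prop := fun q => ∃ l : List G, (∀ x ∈ l, x ∈ Y) ∧ List.foldl τ q l ∈ acc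
      with hCdef
    have hch : ∀ q : σ, ∃ l : List G, C q → ((∀ x ∈ l, x ∈ Y) ∧ List.foldl τ q l ∈ acc) := by
      intro q
      by_cases h : C q
      · exact ⟨h.choose, fun _ => h.choose_spec⟩
      · exact ⟨[], fun hc => absurd hc h⟩
    choose w hw using hch
    set L : ℕ := (Finset.univ : Finset σ).sup (fun q => (w q).length) with hLdef
    have hwlen : ∀ q : σ, (w q).length ≤ L := by
      intro q; rw [hLdef]
      exact Finset.le_sup (f := fun q : σ => (w q).length) (Finset.mem_univ q)
    have hwbound : ∀ q : σ, C q → wordLength X ((w q).prod) ≤ L * MY := by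
      intro q hq
      calc wordLength X ((w q).prod) ≤ (w q).length * MY :=
            wl_prod_le hX (fun x hx => hMY x ((hw q hq).1 x hx))
        _ ≤ L * MY := Nat.mul_le_mul_right _ (hwlen q)
    set r : ℕ := MY + L * MY + L * MY + 1 with hrdef
    have key : ∀ u : List G, (∀ x ∈ u, x ∈ Y) → C (List.foldl τ s0 u) →
        IsRPath X r Q ((w s0).prod) (u.prod * (w (List.foldl τ s0 u)).prod) := by
      intro u
      induction u using List.reverseRecOn with
      | nil =>
        intro _ hC
        simp only [List.foldl_nil, List.prod_nil, one_mul]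
        exact isRPath_single (memQ (w s0) (hw s0 hC).1 (hw s0 hC).2)
      | append_singleton u y ih =>
        intro hmem hC'
        have hy : y ∈ Y := hmem y (by simp)
        have hfold : List.foldl τ s0 (u ++ [y]) = τ (List.foldl τ s0 u) y := by
          simp [List.foldl_append]
        have hC'' : C (τ (List.foldl τ s0 u) y) := hfold ▸ hC'
        have hCq : C (List.foldl τ s0 u) := by
          refine ⟨y :: w (τ (List.foldl τ s0 u) y), ?_, ?_⟩
          · intro x hx
            rcases List.mem_cons.mp hx with rfl | hx
            · exact hy
            · exact (hw _ hC'').1 x hx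
          · simpa using (hw _ hC'').2
        have hpath := ih (fun x hx => hmem x (by simp [hx])) hCq
        have hmemnew : (u ++ [y]).prod * (w (τ (List.foldl τ s0 u) y)).prod ∈ Q := by
          have := memQ ((u ++ [y]) ++ w (τ (List.foldl τ s0 u) y))
            (by intro x hx
                rcases List.mem_append.mp hx with hx | hx
                · exact hmem x hx
                · exact (hw _ hC'').1 x hx)
            (by rw [List.foldl_append, hfold]; exact (hw _ hC'').2)
          rwa [List.prod_append] at this
        have hd : wordDist X (u.prod * (w (List.foldl τ s0 u)).prod)
            ((u ++ [y]).prod * (w (τ (List.foldl τ s0 u) y)).prod) ≤ r := by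
          have heq : (u.prod * (w (List.foldl τ s0 u)).prod)⁻¹
              * ((u ++ [y]).prod * (w (τ (List.foldl τ s0 u) y)).prod)
              = (w (List.foldl τ s0 u)).prod⁻¹
                * (y * (w (τ (List.foldl τ s0 u) y)).prod) := by
            simp [List.prod_append]
            group
          unfold wordDist
          rw [heq]
          have b1 : wordLength X ((w (List.foldl τ s0 u)).prod⁻¹) ≤ L * MY := by
            rw [wl_inv hX]; exact hwbound _ hCq
          have b2 : wordLength X (y * (w (τ (List.foldl τ s0 u) y)).prod) ≤ MY + L * MY :=
            le_trans (wl_mul hX _ _) (add_le_add (hMY y hy) (hwbound _ hC''))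
          calc wordLength X _ ≤ _ + _ := wl_mul hX _ _
            _ ≤ L * MY + (MY + L * MY) := add_le_add b1 b2
            _ ≤ r := by rw [hrdef]; omega
        have := hpath.extend hmemnew hd
        rwa [hfold]
    have hcc : CoarselyConnectedWith X r Q := by
      have halt : ∀ a ∈ Q, IsRPath X r Q ((w s0).prod) a := by
        intro a ha
        obtain ⟨u, hu1, hu2, rfl⟩ := ha
        have hC : C (List.foldl τ s0 u) := ⟨[], by simp, by simpa⟩
        refine (key u hu1 hC).extend (memQ u hu1 hu2) ?_
        have heq : (u.prod * (w (List.foldl τ s0 u)).prod)⁻¹ * u.prod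
            = (w (List.foldl τ s0 u)).prod⁻¹ := by group
        unfold wordDist
        rw [heq, wl_inv hX]
        have := hwbound _ hC
        rw [hrdef]; omega
      intro a ha b hb
      exact ((halt a ha).symm hX).trans (halt b hb)
    exact hncc _ hP r (by omega) hcc
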